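/- For every ε > 0 there exists a measurable function ζ : ℝ^d → ℝ^d taking only finitely many values such that g^A(x) < ε + f(x − ζ(x)) − ⟨ζ(x)σ^{-1}, ζ(x)⟩/(2√A) for all x ∈ ℝ^d. -/

import Mathlib

open MeasureTheory ProbabilityTheory Matrix Filter

noncomputable section

/-- Euclidean inner product on row vectors in `ℝ^d`. -/
def euclInner {d : ℕ} (x y : Fin d → ℝ) : ℝ := ∑ i, x i * y i

/-- Euclidean norm on row vectors in `ℝ^d`. -/
def euclNorm {d : ℕ} (x : Fin d → ℝ) : ℝ := Real.sqrt (∑ i, (x i) ^ 2)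

/-- `g^A(x) := sup_y [ f(x+y) − ⟨yσ⁻¹, y⟩/(2√A) ]`. -/
def gA {d : ℕ} (A : ℝ) (σ : Matrix (Fin d) (Fin d) ℝ) (f : (Fin d → ℝ) → ℝ)
    (x : Fin d → ℝ) : ℝ :=
  sSup {r | ∃ y : Fin d → ℝ, r = f (x + y) - euclInner (y ᵥ* σ⁻¹) y / (2 * Real.sqrt A)}

namespace StmtAux

variable {d : ℕ} {α β : Type*}

lemma euclNorm_nonneg (x : Fin d → ℝ) : 0 ≤ euclNorm x := Real.sqrt_nonneg _

lemma euclNorm_sq (x : Fin d → ℝ) : euclNorm x ^ 2 = ∑ i, (x i) ^ 2 :=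
  Real.sq_sqrt (Finset.sum_nonneg fun i _ => sq_nonneg _)

lemma abs_le_euclNorm (x : Fin d → ℝ) (i : Fin d) : |x i| ≤ euclNorm x := by
  rw [← Real.sqrt_sq_eq_abs]
  exact Real.sqrt_le_sqrt (Finset.single_le_sum (fun j _ => sq_nonneg (x j)) (Finset.mem_univ i))

lemma euclNorm_pos {x : Fin d → ℝ} (hx : x ≠ 0) : 0 < euclNorm x := by
  obtain ⟨i, hi⟩ : ∃ i, x i ≠ 0 := by
    by_contra h; push_neg at h; exact hx (funext h)
  calc (0:ℝ) < |x i| := abs_pos.mpr hi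
    _ ≤ euclNorm x := abs_le_euclNorm x i

lemma euclNorm_smul (c : ℝ) (x : Fin d → ℝ) : euclNorm (c • x) = |c| * euclNorm x := by
  unfold euclNorm
  rw [← Real.sqrt_sq_eq_abs, ← Real.sqrt_mul (sq_nonneg c), Finset.mul_sum]
  congr 1
  refine Finset.sum_congr rfl fun i _ => ?_
  simp only [Pi.smul_apply, smul_eq_mul]; ring

lemma euclNorm_eq_norm (x : EuclideanSpace ℝ (Fin d)) :
    ‖x‖ = euclNorm ((EuclideanSpace.equiv (Fin d) ℝ) x) := by
  rw [EuclideanSpace.norm_eq]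
  unfold euclNorm
  congr 1
  refine Finset.sum_congr rfl fun i _ => ?_
  rw [Real.norm_eq_abs, sq_abs]; rfl

lemma euclInner_eq_dot (u v : Fin d → ℝ) : euclInner u v = u ⬝ᵥ v := rfl

lemma euclInner_smul_q (M : Matrix (Fin d) (Fin d) ℝ) (c : ℝ) (y : Fin d → ℝ) :
    euclInner ((c • y) ᵥ* M) (c • y) = c ^ 2 * euclInner (y ᵥ* M) y := by
  unfold euclInner Matrix.vecMul dotProduct
  rw [Finset.mul_sum]
  refine Finset.sum_congr rfl fun j _ => ?_
  rw [Finset.sum_mul, Finset.sum_mul, Finset.mul_sum]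
  refine Finset.sum_congr rfl fun i _ => ?_
  simp [Pi.smul_apply, smul_eq_mul]; ring

lemma euclInner_neg_q (M : Matrix (Fin d) (Fin d) ℝ) (y : Fin d → ℝ) :
    euclInner ((-y) ᵥ* M) (-y) = euclInner (y ᵥ* M) y := by
  have := euclInner_smul_q M (-1) y
  simpa using this

lemma abs_euclInner_vecMul_le (M : Matrix (Fin d) (Fin d) ℝ) (u v : Fin d → ℝ) :
    |euclInner (u ᵥ* M) v| ≤ (∑ i, ∑ j, |M i j|) * euclNorm u * euclNorm v := by
  unfold euclInner Matrix.vecMul dotProduct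
  calc |∑ j, (∑ i, u i * M i j) * v j| ≤ ∑ j, |(∑ i, u i * M i j) * v j| :=
        Finset.abs_sum_le_sum_abs _ _
    _ ≤ ∑ j, (∑ i, |u i * M i j|) * |v j| := by
        refine Finset.sum_le_sum fun j _ => ?_
        rw [abs_mul]
        gcongr
        exact Finset.abs_sum_le_sum_abs _ _
    _ ≤ ∑ j : Fin d, (∑ i, euclNorm u * |M i j|) * euclNorm v := by
        refine Finset.sum_le_sum fun j _ => ?_
        refine mul_le_mul (Finset.sum_le_sum fun i _ => ?_) (abs_le_euclNorm v j)
          (abs_nonneg _) (Finset.sum_nonneg fun i _ => mul_nonneg (euclNorm_nonneg u) (abs_nonneg _))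
        rw [abs_mul]
        exact mul_le_mul_of_nonneg_right (abs_le_euclNorm u i) (abs_nonneg _)
    _ = (∑ i, ∑ j, |M i j|) * euclNorm u * euclNorm v := by
        rw [Finset.sum_comm]
        rw [Finset.sum_mul, Finset.sum_mul]
        refine Finset.sum_congr rfl fun i _ => ?_
        rw [Finset.sum_mul, Finset.sum_mul, Finset.sum_mul]
        refine Finset.sum_congr rfl fun j _ => ?_
        ring

lemma cont_q (M : Matrix (Fin d) (Fin d) ℝ) :
    Continuous fun u : Fin d → ℝ => euclInner (u ᵥ* M) u := by
  unfold euclInner Matrix.vecMul dotProduct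
  exact continuous_finset_sum _ fun j _ =>
    (continuous_finset_sum _ fun i _ => (continuous_apply i).mul continuous_const).mul
      (continuous_apply j)

lemma q_pos {M : Matrix (Fin d) (Fin d) ℝ} (hM : M.PosDef) {y : Fin d → ℝ} (hy : y ≠ 0) :
    0 < euclInner (y ᵥ* M) y := by
  have h := hM.dotProduct_mulVec_pos hy
  show (0:ℝ) < euclInner (y ᵥ* M) y
  rw [show euclInner (y ᵥ* M) y = (y ᵥ* M) ⬝ᵥ y from rfl, ← dotProduct_mulVec]
  simpa [star_trivial] using h

lemma posdef_coercive (hd : 1 ≤ d) {M : Matrix (Fin d) (Fin d) ℝ} (hM : M.PosDef) :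
    ∃ m > 0, ∀ y : Fin d → ℝ, m * euclNorm y ^ 2 ≤ euclInner (y ᵥ* M) y := by
  set e := EuclideanSpace.equiv (Fin d) ℝ with he
  set S : Set (EuclideanSpace ℝ (Fin d)) := Metric.sphere 0 1 with hS
  have hSc : IsCompact S := isCompact_sphere 0 1
  have hSne : S.Nonempty := by
    refine ⟨EuclideanSpace.single (⟨0, hd⟩ : Fin d) (1:ℝ), ?_⟩
    rw [hS, mem_sphere_zero_iff_norm, EuclideanSpace.norm_single]
    norm_num
  have hqc : Continuous fun y : EuclideanSpace ℝ (Fin d) =>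
      euclInner ((e y) ᵥ* M) (e y) := (cont_q M).comp e.continuous
  obtain ⟨y₀, hy₀S, hy₀min⟩ := hSc.exists_isMinOn hSne hqc.continuousOn
  have hy₀norm : ‖y₀‖ = 1 := mem_sphere_zero_iff_norm.mp hy₀S
  have hy₀ne : e y₀ ≠ 0 := by
    intro h
    have : ‖y₀‖ = 0 := by
      rw [euclNorm_eq_norm y₀, h]
      simp [euclNorm]
    rw [hy₀norm] at this; norm_num at this
  refine ⟨euclInner ((e y₀) ᵥ* M) (e y₀), q_pos hM hy₀ne, fun y => ?_⟩
  by_cases hy : y = 0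
  · simp [hy, euclNorm, euclInner, Matrix.vecMul, dotProduct]
  · set n := euclNorm y with hn
    have hnpos : 0 < n := euclNorm_pos hy
    set u := n⁻¹ • y with hu
    have hyu : y = n • u := by rw [hu, smul_inv_smul₀ hnpos.ne']
    have huS : (e.symm u) ∈ S := by
      rw [hS, mem_sphere_zero_iff_norm, euclNorm_eq_norm]
      have : e (e.symm u) = u := e.apply_symm_apply u
      rw [this, hu, euclNorm_smul, abs_of_pos (inv_pos.mpr hnpos)]
      field_simp
      exact hn.symm
    have hmin := isMinOn_iff.mp hy₀min _ huS
    rw [e.apply_symm_apply] at hmin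
    have hq : euclInner (y ᵥ* M) y = n ^ 2 * euclInner (u ᵥ* M) u := by
      conv_lhs => rw [hyu]
      rw [euclInner_smul_q]
    rw [hq]
    nlinarith [sq_nonneg n, hmin]

def argmaxL (φ : α → β → ℝ) (b₀ : β) : List β → α → β
  | [] => fun _ => b₀
  | z :: l => fun x => if φ x (argmaxL φ b₀ l x) ≤ φ x z then z else argmaxL φ b₀ l x

lemma argmaxL_mem (φ : α → β → ℝ) (b₀ : β) (l : List β) (x : α) :
    argmaxL φ b₀ l x = b₀ ∨ argmaxL φ b₀ l x ∈ l := by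
  induction l with
  | nil => left; rfl
  | cons z l ih =>
    simp only [argmaxL]
    by_cases h : φ x (argmaxL φ b₀ l x) ≤ φ x z
    · rw [if_pos h]; right; exact List.mem_cons_self
    · rw [if_neg h]
      rcases ih with h' | h'
      · left; exact h'
      · right; exact List.mem_cons_of_mem _ h'

lemma argmaxL_le (φ : α → β → ℝ) (b₀ : β) (l : List β) (x : α) :
    ∀ z ∈ l, φ x z ≤ φ x (argmaxL φ b₀ l x) := by
  induction l with
  | nil => intro z hz; simp at hz
  | cons w l ih =>
    intro z hz
    simp only [argmaxL]
    by_cases h : φ x (argmaxL φ b₀ l x) ≤ φ x w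
    · rw [if_pos h]
      rcases List.mem_cons.mp hz with rfl | hz'
      · exact le_refl _
      · exact le_trans (ih z hz') h
    · rw [if_neg h]
      rcases List.mem_cons.mp hz with rfl | hz'
      · exact le_of_not_ge h
      · exact ih z hz'

lemma argmaxL_measurable [MeasurableSpace α] [MeasurableSpace β]
    (φ : α → β → ℝ) (b₀ : β) (l : List β)
    (hφ : ∀ z : β, Measurable fun x => φ x z) :
    Measurable (argmaxL φ b₀ l) ∧ Measurable fun x => φ x (argmaxL φ b₀ l x) := by
  induction l with
  | nil => exact ⟨measurable_const, hφ b₀⟩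
  | cons z l ih =>
    obtain ⟨ih1, ih2⟩ := ih
    have hset : MeasurableSet {x | φ x (argmaxL φ b₀ l x) ≤ φ x z} :=
      measurableSet_le ih2 (hφ z)
    constructor
    · exact Measurable.ite hset measurable_const ih1
    · have : (fun x => φ x (argmaxL φ b₀ (z :: l) x)) =
          fun x => if φ x (argmaxL φ b₀ l x) ≤ φ x z then φ x z else φ x (argmaxL φ b₀ l x) := by
        funext x
        simp only [argmaxL, apply_ite (φ x)]
      rw [this]
      exact Measurable.ite hset (hφ z) ih2

lemma euclNorm_symm_eq (u : Fin d → ℝ) :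
    euclNorm u = ‖(EuclideanSpace.equiv (Fin d) ℝ).symm u‖ := by
  rw [euclNorm_eq_norm, (EuclideanSpace.equiv (Fin d) ℝ).apply_symm_apply]

lemma euclNorm_add_le (u v : Fin d → ℝ) : euclNorm (u + v) ≤ euclNorm u + euclNorm v := by
  rw [euclNorm_symm_eq u, euclNorm_symm_eq v, euclNorm_symm_eq (u + v), map_add]
  exact norm_add_le _ _

lemma euclInner_sub_left (a b c : Fin d → ℝ) :
    euclInner (a - b) c = euclInner a c - euclInner b c := by
  unfold euclInner
  rw [← Finset.sum_sub_distrib]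
  exact Finset.sum_congr rfl fun i _ => by simp [sub_mul]

lemma euclInner_sub_right (a b c : Fin d → ℝ) :
    euclInner a (b - c) = euclInner a b - euclInner a c := by
  unfold euclInner
  rw [← Finset.sum_sub_distrib]
  exact Finset.sum_congr rfl fun i _ => by simp [mul_sub]

lemma q_sub (M : Matrix (Fin d) (Fin d) ℝ) (u v : Fin d → ℝ) :
    euclInner (u ᵥ* M) u - euclInner (v ᵥ* M) v =
      euclInner ((u - v) ᵥ* M) u + euclInner (v ᵥ* M) (u - v) := by
  rw [Matrix.sub_vecMul, euclInner_sub_left, euclInner_sub_right]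
  ring

lemma q_zero (M : Matrix (Fin d) (Fin d) ℝ) :
    euclInner ((0 : Fin d → ℝ) ᵥ* M) 0 = 0 := by
  simp [euclInner]



lemma lipschitz_continuous {L : ℝ} (hL : 0 ≤ L) {f : (Fin d → ℝ) → ℝ}
    (hf : ∀ x y, |f x - f y| ≤ L * euclNorm (x - y)) : Continuous f := by
  set e := EuclideanSpace.equiv (Fin d) ℝ with he
  have hF : LipschitzWith (Real.toNNReal L) fun y : EuclideanSpace ℝ (Fin d) => f (e y) := by
    apply LipschitzWith.of_dist_le_mul
    intro a b
    rw [Real.dist_eq, dist_eq_norm, Real.coe_toNNReal _ hL]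
    calc |f (e a) - f (e b)| ≤ L * euclNorm (e a - e b) := hf _ _
      _ = L * ‖a - b‖ := by rw [euclNorm_eq_norm (a - b), map_sub]
  have hfe : f = (fun y : EuclideanSpace ℝ (Fin d) => f (e y)) ∘ e.symm := by
    funext u
    simp
  rw [hfe]
  exact hF.continuous.comp e.symm.continuous

end StmtAux

open StmtAux

/-- For every `ε > 0` there is a finitely valued measurable `ζ : ℝ^d → ℝ^d` with
`g^A(x) < ε + f(x − ζ(x)) − ⟨ζ(x)σ⁻¹, ζ(x)⟩/(2√A)` for all `x`. -/
theorem stmt5 {d : ℕ} (hd : 1 ≤ d) (σ : Matrix (Fin d) (Fin d) ℝ) (hσ : σ.PosDef)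
    (A : ℝ) (hA : 0 < A) (L : ℝ) (f : (Fin d → ℝ) → ℝ)
    (hf : ∀ x y, |f x - f y| ≤ L * euclNorm (x - y)) :
    ∀ ε : ℝ, 0 < ε →
      ∃ ζ : (Fin d → ℝ) → (Fin d → ℝ), Measurable ζ ∧ (Set.range ζ).Finite ∧
        ∀ x : Fin d → ℝ,
          gA A σ f x < ε + f (x - ζ x)
            - euclInner (ζ x ᵥ* σ⁻¹) (ζ x) / (2 * Real.sqrt A) := by
  intro ε hε
  classical
  set M := σ⁻¹ with hMdef
  have hM : M.PosDef := by rw [hMdef]; exact hσ.inv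
  obtain ⟨m, hm0, hm⟩ := posdef_coercive hd hM
  set c := 2 * Real.sqrt A with hcdef
  have hc : 0 < c := mul_pos two_pos (Real.sqrt_pos.mpr hA)
  set L' := max L 0 with hL'def
  have hL'0 : 0 ≤ L' := le_max_right _ _
  have hf' : ∀ a b, |f a - f b| ≤ L' * euclNorm (a - b) := fun a b =>
    (hf a b).trans (mul_le_mul_of_nonneg_right (le_max_left _ _) (euclNorm_nonneg _))
  have hfc : Continuous f := lipschitz_continuous hL'0 hf'
  set K := ∑ i, ∑ j, |M i j| with hKdef
  have hK0 : 0 ≤ K := Finset.sum_nonneg fun i _ => Finset.sum_nonneg fun j _ => abs_nonneg _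
  set C := c * L' / m with hCdef
  have hC0 : 0 ≤ C := div_nonneg (mul_nonneg hc.le hL'0) hm0.le
  set E := L' + K * (2 * C + 1) / c with hEdef
  have hE0 : 0 ≤ E := add_nonneg hL'0 (div_nonneg (mul_nonneg hK0 (by linarith)) hc.le)
  set δ := min 1 (ε / (2 * (E + 1))) with hδdef
  have hδ0 : 0 < δ := lt_min one_pos (div_pos hε (by linarith))
  have hδ1 : δ ≤ 1 := min_le_left _ _
  have hδE : δ * E ≤ ε / 2 := by
    have h1 : δ ≤ ε / (2 * (E + 1)) := min_le_right _ _
    have h2 : δ * E ≤ (ε / (2 * (E + 1))) * E := mul_le_mul_of_nonneg_right h1 hE0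
    have h3 : (ε / (2 * (E + 1))) * E ≤ ε / 2 := by
      rw [div_mul_eq_mul_div, div_le_div_iff₀ (by linarith) (by norm_num)]
      nlinarith
    linarith
  set e := EuclideanSpace.equiv (Fin d) ℝ with hedef
  have hcover : Metric.closedBall (0 : EuclideanSpace ℝ (Fin d)) C ⊆
      ⋃ z : EuclideanSpace ℝ (Fin d), Metric.ball z δ := fun y _ =>
    Set.mem_iUnion.mpr ⟨y, Metric.mem_ball_self hδ0⟩
  obtain ⟨t, ht⟩ := (isCompact_closedBall (0 : EuclideanSpace ℝ (Fin d)) C).elim_finite_subcover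
    (fun z => Metric.ball z δ) (fun z => Metric.isOpen_ball) hcover
  set netL : List (Fin d → ℝ) := t.toList.map (fun z => -(e z)) with hnetdef
  set fullL : List (Fin d → ℝ) := (0 : Fin d → ℝ) :: netL with hfulldef
  set φ : (Fin d → ℝ) → (Fin d → ℝ) → ℝ :=
    fun x w => f (x - w) - euclInner (w ᵥ* M) w / c with hφdef
  have hφmeas : ∀ w : Fin d → ℝ, Measurable fun x : Fin d → ℝ => φ x w := by
    intro w
    have hcw : Continuous fun x : Fin d → ℝ => f (x - w) :=
      hfc.comp (continuous_id.sub continuous_const)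
    exact hcw.measurable.sub
      (measurable_const : Measurable fun _ : Fin d → ℝ => euclInner (w ᵥ* M) w / c)
  set ζ := argmaxL φ 0 fullL with hζdef
  clear_value M c L' K C E δ netL fullL φ ζ
  refine ⟨ζ, ?_, ?_, ?_⟩
  · rw [hζdef]
    exact (argmaxL_measurable φ 0 fullL hφmeas).1
  · refine Set.Finite.subset fullL.toFinset.finite_toSet ?_
    rintro w ⟨x, rfl⟩
    have hzx : ζ x = argmaxL φ 0 fullL x := by rw [hζdef]
    rcases argmaxL_mem φ 0 fullL x with h | h
    · rw [hzx, h]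
      exact List.mem_toFinset.mpr (by rw [hfulldef]; exact List.mem_cons_self)
    · rw [hzx]
      exact List.mem_toFinset.mpr h
  · intro x
    have hζmax : ∀ w ∈ fullL, φ x w ≤ φ x (ζ x) := by
      rw [hζdef]; exact argmaxL_le φ 0 fullL x
    have hφ0 : φ x 0 = f x := by
      have hq0 := q_zero M
      simp [hφdef, euclInner, sub_zero]
    have key : ∀ y : Fin d → ℝ,
        f (x + y) - euclInner (y ᵥ* M) y / c ≤ φ x (ζ x) + ε / 2 := by
      intro y
      rcases le_total (euclNorm y) C with hyC | hyC
      · -- near case : use the net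
        have hyB : e.symm y ∈ Metric.closedBall (0 : EuclideanSpace ℝ (Fin d)) C := by
          rw [Metric.mem_closedBall, dist_zero_right, ← euclNorm_symm_eq]
          exact hyC
        obtain ⟨z, hzt, hzball⟩ := Set.mem_iUnion₂.mp (ht hyB)
        set zv := e z with hzv
        have hdist : euclNorm (y - zv) < δ := by
          have h1 : dist (e.symm y) z < δ := Metric.mem_ball.mp hzball
          rw [dist_eq_norm] at h1
          have h2 : e.symm (y - zv) = e.symm y - z := by
            rw [map_sub, hzv, e.symm_apply_apply]
          rw [← h2, ← euclNorm_symm_eq] at h1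
          exact h1
        have hzy : euclNorm (zv - y) = euclNorm (y - zv) := by
          rw [show zv - y = (-1 : ℝ) • (y - zv) by rw [neg_one_smul]; abel]
          rw [euclNorm_smul]
          norm_num
        have hzC : euclNorm zv ≤ C + 1 := by
          have h4 := euclNorm_add_le y (zv - y)
          rw [show y + (zv - y) = zv by abel] at h4
          linarith [hdist.le, hyC, hδ1, hzy]
        have hmem : -zv ∈ fullL := by
          rw [hfulldef]
          refine List.mem_cons_of_mem _ ?_
          rw [hnetdef]
          exact List.mem_map.mpr ⟨z, Finset.mem_toList.mpr hzt, by rw [hzv]⟩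
        have hφz : φ x (-zv) = f (x + zv) - euclInner (zv ᵥ* M) zv / c := by
          simp only [hφdef]
          rw [sub_neg_eq_add, euclInner_neg_q]
        have h1 : f (x + y) ≤ f (x + zv) + L' * δ := by
          have ha := (abs_le.mp (hf' (x + y) (x + zv))).2
          rw [show (x + y) - (x + zv) = y - zv by abel] at ha
          nlinarith [hdist.le, euclNorm_nonneg (y - zv)]
        have habs : |euclInner (y ᵥ* M) y - euclInner (zv ᵥ* M) zv| ≤
            K * euclNorm (y - zv) * euclNorm y + K * euclNorm zv * euclNorm (y - zv) := by
          rw [q_sub M y zv, hKdef]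
          exact (abs_add_le _ _).trans
            (add_le_add (abs_euclInner_vecMul_le M (y - zv) y)
              (abs_euclInner_vecMul_le M zv (y - zv)))
        have hb1 : K * euclNorm (y - zv) * euclNorm y ≤ K * δ * C :=
          mul_le_mul (mul_le_mul_of_nonneg_left hdist.le hK0) hyC (euclNorm_nonneg y)
            (mul_nonneg hK0 hδ0.le)
        have hb2 : K * euclNorm zv * euclNorm (y - zv) ≤ K * (C + 1) * δ :=
          mul_le_mul (mul_le_mul_of_nonneg_left hzC hK0) hdist.le (euclNorm_nonneg _)
            (mul_nonneg hK0 (by linarith))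
        have hring : K * δ * C + K * (C + 1) * δ = K * δ * (2 * C + 1) := by ring
        have h2 : euclInner (zv ᵥ* M) zv - euclInner (y ᵥ* M) y ≤ K * δ * (2 * C + 1) := by
          have hneg := neg_abs_le (euclInner (y ᵥ* M) y - euclInner (zv ᵥ* M) zv)
          linarith [habs, hb1, hb2, hring]
        have h3 : (euclInner (zv ᵥ* M) zv - euclInner (y ᵥ* M) y) / c ≤
            K * δ * (2 * C + 1) / c := by gcongr
        have hφle := hζmax _ hmem
        have hsplit : f (x + y) - euclInner (y ᵥ* M) y / c =
            (f (x + y) - euclInner (zv ᵥ* M) zv / c) +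
              (euclInner (zv ᵥ* M) zv - euclInner (y ᵥ* M) y) / c := by ring
        have hEδ : L' * δ + K * δ * (2 * C + 1) / c = δ * E := by rw [hEdef]; ring
        calc f (x + y) - euclInner (y ᵥ* M) y / c
            = f (x + y) - euclInner (zv ᵥ* M) zv / c +
                (euclInner (zv ᵥ* M) zv - euclInner (y ᵥ* M) y) / c := hsplit
          _ ≤ (f (x + zv) + L' * δ) - euclInner (zv ᵥ* M) zv / c +
                K * δ * (2 * C + 1) / c := by linarith [h1, h3]
          _ = φ x (-zv) + (L' * δ + K * δ * (2 * C + 1) / c) := by rw [hφz]; ring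
          _ = φ x (-zv) + δ * E := by rw [hEδ]
          _ ≤ φ x (ζ x) + ε / 2 := add_le_add hφle hδE
      · -- far case : quadratic penalty dominates
        have h1 : f (x + y) ≤ f x + L' * euclNorm y := by
          have ha := (abs_le.mp (hf' (x + y) x)).2
          rw [show (x + y) - x = y by abel] at ha
          linarith
        have h2 := hm y
        have hmC : m * C = c * L' := by rw [hCdef]; field_simp
        have h5 := congrArg (· * euclNorm y) hmC
        have h6 := mul_le_mul_of_nonneg_left hyC (mul_nonneg hm0.le (euclNorm_nonneg y))
        have h3 : c * (L' * euclNorm y) ≤ euclInner (y ᵥ* M) y := by nlinarith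
        have h4 : L' * euclNorm y ≤ euclInner (y ᵥ* M) y / c := by
          rw [le_div_iff₀ hc]; linarith
        have hφle := hζmax 0 (by rw [hfulldef]; exact List.mem_cons_self)
        rw [hφ0] at hφle
        linarith
    have hgA : gA A σ f x =
        sSup {r | ∃ y : Fin d → ℝ, r = f (x + y) - euclInner (y ᵥ* M) y / c} := by
      rw [hMdef, hcdef]
      rfl
    have hsup : gA A σ f x ≤ φ x (ζ x) + ε / 2 := by
      rw [hgA]
      refine csSup_le ⟨_, 0, rfl⟩ ?_
      rintro r ⟨y, rfl⟩
      exact key y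
    calc gA A σ f x ≤ φ x (ζ x) + ε / 2 := hsup
      _ < ε + φ x (ζ x) := by linarith
      _ = ε + f (x - ζ x) - euclInner (ζ x ᵥ* M) (ζ x) / c := by
          simp only [hφdef]; ring
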